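/- Every ring isomorphism between two p-adic fields is automatically a homeomorphism: if E and E' are finite extensions of ℚ_p, each equipped with the topology induced by its unique norm extending the p-adic norm of ℚ_p (with respect to which it is complete), then any ring isomorphism φ : E → E' is continuous (and hence a homeomorphism). In particular, a ring isomorphism of p-adic fields is an isomorphism of topological (equivalently, valued) fields. -/

import Mathlib

open IsUltrametricDist in
theorem aux_root_norm_one (p : ℕ) [Fact p.Prime]
    (E' : Type*) [NormedField E'] [Algebra ℚ_[p] E']
    (hE' : ∀ x : ℚ_[p], ‖algebraMap ℚ_[p] E' x‖ = ‖x‖)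
    [FiniteDimensional ℚ_[p] E'] [CompleteSpace E']
    (ψ : ℚ_[p] →+* E') (v : ℚ_[p]) (hv : ‖v‖ ≤ 1) (hv1 : ‖v - 1‖ < 1) :
    ‖ψ v‖ = 1 := by
  haveI hultra : IsUltrametricDist E' := by
    apply isUltrametricDist_of_forall_norm_natCast_le_one
    intro n
    rw [← map_natCast (algebraMap ℚ_[p] E') n, hE']
    exact_mod_cast Padic.norm_int_le_one (n : ℤ)
  letI : NormedSpace ℚ_[p] E' :=
    { norm_smul_le := fun c x => by rw [Algebra.smul_def, norm_mul, hE'] }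
  haveI : ProperSpace E' := FiniteDimensional.proper ℚ_[p] E'
  -- the integral element v' and the root extraction
  set v' : ℤ_[p] := ⟨v, hv⟩ with hv'def
  have hv'1 : ‖(1 - v' : ℤ_[p])‖ < 1 := by
    have : ((1 - v' : ℤ_[p]) : ℚ_[p]) = -(v - 1) := by push_cast; ring
    rw [PadicInt.norm_def, this, norm_neg]
    exact hv1
  have hroot : ∀ m : ℕ, ¬ (p ∣ m) → ∃ w : ℤ_[p], w ^ m = v' := by
    intro m hm
    set F : Polynomial ℤ_[p] := Polynomial.X ^ m - Polynomial.C v' with hF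
    have heval : F.eval 1 = 1 - v' := by simp [hF]
    have hderiv : F.derivative.eval 1 = (m : ℤ_[p]) := by
      simp [hF, Polynomial.derivative_X_pow]
    have hmnorm : ‖(m : ℤ_[p])‖ = 1 := by
      refine le_antisymm (PadicInt.norm_le_one _) (not_lt.mp fun h => hm ?_)
      have := (PadicInt.norm_int_lt_one_iff_dvd (m : ℤ)).mp (by exact_mod_cast h)
      exact_mod_cast this
    have hnorm : ‖F.eval 1‖ < ‖F.derivative.eval 1‖ ^ 2 := by
      rw [heval, hderiv, hmnorm, one_pow]; exact hv'1
    obtain ⟨z, hz, -, -, -⟩ := hensels_lemma hnorm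
    refine ⟨z, ?_⟩
    have : z ^ m - v' = 0 := by simpa [hF, sub_eq_zero] using hz
    exact sub_eq_zero.mp this
  -- suppose for contradiction that the norm is not 1
  by_contra hne
  have hvne : v ≠ 0 := by
    intro h
    rw [h] at hv1
    simp at hv1
  have hψv : ψ v ≠ 0 := fun h => hvne (ψ.injective (by rw [h, map_zero]))
  set c := ‖ψ v‖ with hcdef
  have hc0 : 0 < c := norm_pos_iff.mpr hψv
  set t : E' := if 1 ≤ c then ψ v else (ψ v)⁻¹ with htdef
  have ht : 1 < ‖t‖ := by
    rcases le_or_gt 1 c with h | h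
    · rw [htdef, if_pos h]
      exact lt_of_le_of_ne h (Ne.symm hne)
    · rw [htdef, if_neg (not_le.mpr h), norm_inv]
      exact one_lt_inv_iff₀.mpr ⟨hc0, h⟩
  set m : ℕ → ℕ := fun j => (p + 1) ^ (j + 1) with hmdef
  have hmp : ∀ j, ¬ p ∣ m j := by
    intro j hd
    have h1 : p ∣ p + 1 := (Fact.out : p.Prime).dvd_of_dvd_pow hd
    have h2 : p ∣ 1 := (Nat.dvd_add_right (dvd_refl p)).mp h1
    have := Nat.le_of_dvd one_pos h2
    have hp1 := (Fact.out : p.Prime).one_lt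
    omega
  have hmmono : StrictMono m := by
    intro j k hjk
    have hb : 1 < p + 1 := by have := (Fact.out : p.Prime).one_lt; omega
    exact Nat.pow_lt_pow_right hb (by omega)
  choose w hw using fun j => hroot (m j) (hmp j)
  set y : ℕ → E' := fun j => if 1 ≤ c then ψ ((w j : ℚ_[p])) else (ψ ((w j : ℚ_[p])))⁻¹ with hydef
  have hwψ : ∀ j, ψ ((w j : ℚ_[p])) ^ (m j) = ψ v := by
    intro j
    rw [← map_pow]
    congr 1
    exact_mod_cast congrArg (fun z : ℤ_[p] => (z : ℚ_[p])) (hw j)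
  have hy : ∀ j, ‖y j‖ ^ (m j) = ‖t‖ := by
    intro j
    rcases le_or_gt 1 c with h | h
    · rw [hydef, htdef]
      simp only [if_pos h]
      rw [← norm_pow, hwψ]
    · rw [hydef, htdef]
      simp only [if_neg (not_le.mpr h)]
      rw [norm_inv, norm_inv, inv_pow, ← norm_pow, hwψ]
  have hy1 : ∀ j, 1 < ‖y j‖ := by
    intro j
    by_contra h
    push_neg at h
    have := pow_le_one₀ (n := m j) (norm_nonneg _) h
    rw [hy j] at this
    linarith
  have hmono : StrictAnti fun j => ‖y j‖ := by
    intro j k hjk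
    by_contra h
    push_neg at h
    have h1 : ‖t‖ ≤ ‖y k‖ ^ (m j) := by
      rw [← hy j]
      exact pow_le_pow_left₀ (norm_nonneg _) h _
    have h2 : ‖y k‖ ^ (m j) < ‖y k‖ ^ (m k) :=
      pow_lt_pow_right₀ (hy1 k) (hmmono hjk)
    rw [hy k] at h2
    linarith
  have hdist : ∀ j k, j ≠ k → 1 < ‖y j - y k‖ := by
    intro j k hjk
    have hne' : ‖y j‖ ≠ ‖-(y k)‖ := by
      rw [norm_neg]
      rcases hjk.lt_or_gt with h | h
      · exact (hmono h).ne'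
      · exact (hmono h).ne
    rw [sub_eq_add_neg, IsUltrametricDist.norm_add_eq_max_of_norm_ne_norm hne']
    exact lt_max_of_lt_left (hy1 j)
  have hball : ∀ j, y j ∈ Metric.closedBall (0 : E') ‖t‖ := by
    intro j
    rw [Metric.mem_closedBall, dist_zero_right, ← hy j]
    exact le_self_pow₀ (hy1 j).le (by positivity)
  obtain ⟨a, -, f, hf, hconv⟩ := (isCompact_closedBall (0 : E') ‖t‖).tendsto_subseq hball
  have hcs := hconv.cauchySeq
  rw [Metric.cauchySeq_iff] at hcs
  obtain ⟨N, hN⟩ := hcs 1 one_pos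
  have h1 := hN N le_rfl (N + 1) (Nat.le_succ N)
  rw [Function.comp_apply, Function.comp_apply, dist_eq_norm] at h1
  exact absurd h1 (not_lt.mpr (hdist _ _ (hf.injective.ne (Nat.succ_ne_self N).symm)).le)

theorem aux_psi_norm (p : ℕ) [Fact p.Prime]
    (E' : Type*) [NormedField E'] [Algebra ℚ_[p] E']
    (hE' : ∀ x : ℚ_[p], ‖algebraMap ℚ_[p] E' x‖ = ‖x‖)
    [FiniteDimensional ℚ_[p] E'] [CompleteSpace E']
    (ψ : ℚ_[p] →+* E') (x : ℚ_[p]) : ‖ψ x‖ = ‖x‖ := by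
  -- first, the case of units
  have hunit : ∀ u : ℚ_[p], ‖u‖ = 1 → ‖ψ u‖ = 1 := by
    intro u hu
    set u' : ℤ_[p] := ⟨u, hu.le⟩ with hu'def
    have hu'norm : ‖u'‖ = 1 := by rw [PadicInt.norm_def]; exact hu
    have h0 : PadicInt.toZMod u' ≠ 0 := by
      intro h
      have hker : u' ∈ RingHom.ker (PadicInt.toZMod (p := p)) := RingHom.mem_ker.mpr h
      rw [PadicInt.ker_toZMod, IsLocalRing.mem_maximalIdeal, mem_nonunits_iff] at hker
      exact hker (PadicInt.isUnit_iff.mpr hu'norm)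
    have h1 : PadicInt.toZMod (u' ^ (p - 1) - 1) = 0 := by
      rw [map_sub, map_pow, map_one, ZMod.pow_card_sub_one_eq_one h0, sub_self]
    have h2 : ‖(u' ^ (p - 1) - 1 : ℤ_[p])‖ < 1 := by
      have hker : u' ^ (p - 1) - 1 ∈ RingHom.ker (PadicInt.toZMod (p := p)) :=
        RingHom.mem_ker.mpr h1
      rw [PadicInt.ker_toZMod, IsLocalRing.mem_maximalIdeal, mem_nonunits_iff] at hker
      exact PadicInt.not_isUnit_iff.mp hker
    have hv : ‖u ^ (p - 1)‖ ≤ 1 := by rw [norm_pow, hu, one_pow]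
    have hv1 : ‖u ^ (p - 1) - 1‖ < 1 := by
      have hcast : ((u' ^ (p - 1) - 1 : ℤ_[p]) : ℚ_[p]) = u ^ (p - 1) - 1 := by
        push_cast [hu'def]
        rfl
      rw [← hcast]
      rw [PadicInt.norm_def] at h2
      exact h2
    have hψv : ‖ψ (u ^ (p - 1))‖ = 1 := aux_root_norm_one p E' hE' ψ _ hv hv1
    rw [map_pow, norm_pow] at hψv
    have hp1 : p - 1 ≠ 0 := by have := (Fact.out : p.Prime).one_lt; omega
    rcases lt_trichotomy ‖ψ u‖ 1 with h | h | h
    · exact absurd hψv (by simpa using (pow_lt_one₀ (norm_nonneg _) h hp1).ne)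
    · exact h
    · exact absurd hψv (by simpa using (one_lt_pow₀ h hp1).ne')
  rcases eq_or_ne x 0 with rfl | hx
  · simp
  · have hppos : (0 : ℝ) < p := by exact_mod_cast (Fact.out : p.Prime).pos
    have hpne : ((p : ℚ_[p])) ≠ 0 := by
      exact_mod_cast Nat.cast_ne_zero.mpr (Fact.out : p.Prime).ne_zero
    set n : ℤ := x.valuation with hn
    set u : ℚ_[p] := x * (p : ℚ_[p]) ^ (-n) with hudef
    have hu : ‖u‖ = 1 := by
      rw [hudef, norm_mul, norm_zpow, Padic.norm_eq_zpow_neg_valuation hx, Padic.norm_p, ← hn,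
        inv_zpow, ← zpow_neg, neg_neg, ← zpow_add₀ (ne_of_gt hppos)]
      simp
    have hxeq : x = u * (p : ℚ_[p]) ^ n := by
      rw [hudef, mul_assoc, ← zpow_add₀ hpne]
      simp
    have hψp : ‖ψ (p : ℚ_[p])‖ = ‖(p : ℚ_[p])‖ := by
      rw [map_natCast ψ, ← map_natCast (algebraMap ℚ_[p] E'), hE']
    calc ‖ψ x‖ = ‖ψ u‖ * ‖ψ (p : ℚ_[p])‖ ^ n := by
          rw [hxeq, map_mul, norm_mul, map_zpow₀, norm_zpow]
      _ = ‖u‖ * ‖(p : ℚ_[p])‖ ^ n := by rw [hunit u hu, hu, hψp]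
      _ = ‖x‖ := by rw [← norm_zpow, ← norm_mul, ← hxeq]

theorem aux_ringhom_continuous (p : ℕ) [Fact p.Prime]
    (E E' : Type*) [NormedField E] [NormedField E']
    [Algebra ℚ_[p] E] [Algebra ℚ_[p] E']
    (hE : ∀ x : ℚ_[p], ‖algebraMap ℚ_[p] E x‖ = ‖x‖)
    (hE' : ∀ x : ℚ_[p], ‖algebraMap ℚ_[p] E' x‖ = ‖x‖)
    [FiniteDimensional ℚ_[p] E] [FiniteDimensional ℚ_[p] E'] [CompleteSpace E']
    (φ : E →+* E') : Continuous φ := by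
  set ψ : ℚ_[p] →+* E' := φ.comp (algebraMap ℚ_[p] E) with hψdef
  have hψ : ∀ x, ‖ψ x‖ = ‖x‖ := aux_psi_norm p E' hE' ψ
  have hψcont : Continuous ψ := (AddMonoidHomClass.isometry_of_norm ψ hψ).continuous
  have halg : Continuous (algebraMap ℚ_[p] E) :=
    (AddMonoidHomClass.isometry_of_norm _ hE).continuous
  haveI : ContinuousSMul ℚ_[p] E := by
    refine ⟨?_⟩
    have h : (fun q : ℚ_[p] × E => q.1 • q.2) = fun q => algebraMap ℚ_[p] E q.1 * q.2 := by
      funext q; rw [Algebra.smul_def]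
    rw [h]
    exact (halg.comp continuous_fst).mul continuous_snd
  let b := Module.finBasis ℚ_[p] E
  have hrep : ∀ x : E, φ x = ∑ i, ψ (b.repr x i) * φ (b i) := by
    intro x
    conv_lhs => rw [← b.sum_repr x]
    rw [map_sum]
    exact Finset.sum_congr rfl fun i _ => by rw [Algebra.smul_def, map_mul]; rfl
  have hcoord : ∀ i, Continuous fun x : E => b.repr x i := fun i =>
    (b.coord i).continuous_of_finiteDimensional
  have hcont : Continuous fun x : E => ∑ i, ψ (b.repr x i) * φ (b i) := by
    apply continuous_finset_sum
    intro i _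
    exact (hψcont.comp (hcoord i)).mul continuous_const
  have hfun : ⇑φ = fun x => ∑ i, ψ (b.repr x i) * φ (b i) := funext hrep
  rw [hfun]
  exact hcont

/-- Every ring isomorphism between two `p`-adic fields is automatically a homeomorphism:
if `E`, `E'` are finite extensions of `ℚ_p`, each equipped (as a normed field) with the topology
induced by its (unique) norm extending the `p`-adic norm of `ℚ_p`, with respect to which it is
complete, then any ring isomorphism `φ : E ≃+* E'` is continuous, and hence a homeomorphism
(its inverse is continuous as well). -/
theorem padic_field_ring_iso_is_homeomorphism (p : ℕ) [Fact p.Prime]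
    (E E' : Type*) [NormedField E] [NormedField E']
    [Algebra ℚ_[p] E] [Algebra ℚ_[p] E']
    (hE : ∀ x : ℚ_[p], ‖algebraMap ℚ_[p] E x‖ = ‖x‖)
    (hE' : ∀ x : ℚ_[p], ‖algebraMap ℚ_[p] E' x‖ = ‖x‖)
    [FiniteDimensional ℚ_[p] E] [FiniteDimensional ℚ_[p] E']
    [CompleteSpace E] [CompleteSpace E']
    (φ : E ≃+* E') :
    Continuous φ ∧ Continuous φ.symm :=
  ⟨aux_ringhom_continuous p E E' hE hE' φ.toRingHom,
   aux_ringhom_continuous p E' E hE' hE φ.symm.toRingHom⟩
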